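/- arXiv:1210.3721 — 3 statements merged into one kernel-verified Lean document; each statement's English description precedes it below -/
import Mathlib

section
/- Let a, e > 0, b ∈ ℝ, and let φ(τ,ξ) be holomorphic in τ near 0 with |φ(τ,ξ)| ≤ C₁(|τ|³ + ξ²) for (τ,ξ) near (0,0). Then for ξ > 0 sufficiently small, the equation aτ² + bξτ + eξ = φ(τ,ξ) has exactly one solution τ in the ball of radius Aξ centered at the root τ₊ = i√((e/a)ξ) + O(ξ) of g(τ) = aτ² + bξτ + eξ, provided A is chosen large enough; this solution has imaginary part of order √ξ and real part of order ξ. -/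
open Metric Complex Set NNReal


private lemma aux_id1 (a b e ξ : ℝ) (c τ : ℂ) (φτ : ℂ) (hc2 : (a:ℂ)*c^2 = -((e:ℂ)*(ξ:ℂ)))
    (hne : (a:ℂ)*(τ+c) ≠ 0) :
    (c + (φτ - (b:ℂ)*(ξ:ℂ)*τ)/((a:ℂ)*(τ+c))) - τ
      = (φτ - ((a:ℂ)*τ^2 + (b:ℂ)*(ξ:ℂ)*τ + (e:ℂ)*(ξ:ℂ)))/((a:ℂ)*(τ+c)) := by
  rw [eq_div_iff hne, sub_mul, add_mul, div_mul_cancel₀ _ hne]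
  linear_combination hc2

private lemma aux_id2 (a b ξ : ℝ) (c τ σ : ℂ) (φτ φσ : ℂ)
    (h1 : (a:ℂ)*(τ+c) ≠ 0) (h2 : (a:ℂ)*(σ+c) ≠ 0) :
    (c + (φτ - (b:ℂ)*(ξ:ℂ)*τ)/((a:ℂ)*(τ+c))) - (c + (φσ - (b:ℂ)*(ξ:ℂ)*σ)/((a:ℂ)*(σ+c)))
      = ((φτ - φσ) - (b:ℂ)*(ξ:ℂ)*(τ-σ))/((a:ℂ)*(τ+c))
        + (φσ - (b:ℂ)*(ξ:ℂ)*σ) * ((σ-τ)/(((a:ℂ)*(τ+c))*(σ+c))) := by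
  have h3 : (σ+c) ≠ 0 := fun h => h2 (by rw [h, mul_zero])
  have h4 : (τ+c) ≠ 0 := fun h => h1 (by rw [h, mul_zero])
  have h5 : (a:ℂ) ≠ 0 := fun h => h1 (by rw [h, zero_mul])
  field_simp
  ring

private lemma aux_coef (Lc babs D a m t X : ℝ) (ha : a ≠ 0) (hm : m ≠ 0) (ht : t ≠ 0) :
    (Lc*(t*t)*X + babs*(t*t)*X) / (a*(m*t)) + D*((t*t)*t) * (X / ((a*(m*t))*(m*t)))
      = (Lc/(a*m) + babs/(a*m) + D/(a*m^2)) * t * X := by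
  field_simp

set_option maxHeartbeats 1000000 in
theorem stmt_9 (a e b : ℝ) (ha : 0 < a) (he : 0 < e)
    (φ : ℂ → ℝ → ℂ) (r C₁ : ℝ) (hr : 0 < r) (hC₁ : 0 < C₁)
    (hhol : ∀ ξ ∈ Set.Ioo (0:ℝ) r, AnalyticOn ℂ (fun τ => φ τ ξ) (Metric.ball 0 r))
    (hbound : ∀ τ ∈ Metric.ball (0:ℂ) r, ∀ ξ ∈ Set.Ioo (0:ℝ) r,
      ‖φ τ ξ‖ ≤ C₁ * (‖τ‖^3 + ξ^2)) :
    ∃ A > 0, ∃ K > 0, ∃ ξ₀ > 0, ∀ ξ : ℝ, 0 < ξ → ξ < ξ₀ →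
      (∃! τ : ℂ, τ ∈ Metric.ball (Complex.I * (Real.sqrt (e/a * ξ) : ℂ)) (A*ξ) ∧
        (a : ℂ)*τ^2 + (b : ℂ)*(ξ : ℂ)*τ + (e : ℂ)*(ξ : ℂ) = φ τ ξ) ∧
      (∀ τ : ℂ, τ ∈ Metric.ball (Complex.I * (Real.sqrt (e/a * ξ) : ℂ)) (A*ξ) →
        (a : ℂ)*τ^2 + (b : ℂ)*(ξ : ℂ)*τ + (e : ℂ)*(ξ : ℂ) = φ τ ξ →
        |τ.re| ≤ K * ξ ∧ |τ.im - Real.sqrt (e/a * ξ)| ≤ K * ξ) := by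
  have ham : 0 < e / a := div_pos he ha
  set m : ℝ := Real.sqrt (e / a) with hm_def
  have hm : 0 < m := Real.sqrt_pos.mpr ham
  set D : ℝ := 8*C₁*m^3 + C₁ + 2* |b| * m with hD_def
  have hD : 0 < D := by positivity
  set A : ℝ := 2*D/(a*m) + 1 with hA_def
  have hA : 0 < A := by positivity
  set Lc : ℝ := 108*C₁*m^2 + 4*C₁/m with hLc_def
  have hLcpos : 0 < Lc := by positivity
  set E : ℝ := Lc/(a*m) + |b|/(a*m) + D/(a*m^2) with hE_def
  have hE : 0 < E := by positivity
  refine ⟨A, hA, A, hA, min (min 1 r) (min ((m/(2*A))^2) (min ((r/(4*m))^2) ((1/(2*E))^2))),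
    by positivity, ?_⟩
  intro ξ hξ hξ'
  have hξ1 : ξ ≤ 1 := le_of_lt (lt_of_lt_of_le hξ' ((min_le_left _ _).trans (min_le_left _ _)))
  have hξr : ξ < r := lt_of_lt_of_le hξ' ((min_le_left _ _).trans (min_le_right _ _))
  have hξIoo : ξ ∈ Set.Ioo (0:ℝ) r := ⟨hξ, hξr⟩
  set t : ℝ := Real.sqrt ξ with ht_def
  have htpos : 0 < t := Real.sqrt_pos.mpr hξ
  have htt : t * t = ξ := Real.mul_self_sqrt hξ.le
  have ht1 : t ≤ 1 := Real.sqrt_le_one.mpr hξ1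
  have hξt : ξ ≤ t := by
    calc ξ = t*t := htt.symm
      _ ≤ t*1 := mul_le_mul_of_nonneg_left ht1 htpos.le
      _ = t := mul_one t
  -- bounds coming from ξ < ξ₀
  have hsqle : ∀ x : ℝ, 0 ≤ x → ξ ≤ x^2 → t ≤ x := by
    intro x hx hle
    calc t ≤ Real.sqrt (x^2) := Real.sqrt_le_sqrt hle
      _ = x := Real.sqrt_sq hx
  have h2A : t ≤ m/(2*A) := hsqle _ (by positivity)
    (le_of_lt (lt_of_lt_of_le hξ' ((min_le_right _ _).trans (min_le_left _ _))))
  have h4r : t ≤ r/(4*m) := hsqle _ (by positivity)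
    (le_of_lt (lt_of_lt_of_le hξ' ((min_le_right _ _).trans
      ((min_le_right _ _).trans (min_le_left _ _)))))
  have h2E : t ≤ 1/(2*E) := hsqle _ (by positivity)
    (le_of_lt (lt_of_lt_of_le hξ' ((min_le_right _ _).trans
      ((min_le_right _ _).trans (min_le_right _ _)))))
  -- the root
  set s : ℝ := Real.sqrt (e/a * ξ) with hs_def
  have hs_eq : s = m * t := by rw [hs_def, ht_def, hm_def, Real.sqrt_mul ham.le]
  have hs : 0 < s := by rw [hs_eq]; positivity
  have hs2 : s^2 = e/a*ξ := Real.sq_sqrt (by positivity)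
  set c : ℂ := Complex.I * (s : ℂ) with hc_def
  have hnormc : ‖c‖ = s := by
    rw [hc_def, norm_mul, Complex.norm_I, one_mul, Complex.norm_real, Real.norm_of_nonneg hs.le]
  have hc2 : (a:ℂ)*c^2 = -((e:ℂ)*(ξ:ℂ)) := by
    have h0 : (a:ℝ)*(s^2) = e*ξ := by rw [hs2]; field_simp
    have h2 := congrArg (fun x : ℝ => (x:ℂ)) h0
    push_cast at h2
    rw [hc_def]
    linear_combination ((a:ℂ)*(s:ℂ)^2)*(Complex.I_sq) - h2
  have hAξs : A * ξ ≤ s / 2 := by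
    have : A * ξ ≤ A * (t * t) := by rw [htt]
    calc A * ξ = A * t * t := by rw [← htt]; ring
      _ ≤ (m/2) * t := by
          have : A * t ≤ m / 2 := by
            have := mul_le_mul_of_nonneg_left h2A hA.le
            calc A * t ≤ A * (m/(2*A)) := this
              _ = m/2 := by field_simp
          exact mul_le_mul_of_nonneg_right this htpos.le
      _ = (m * t) / 2 := by ring
      _ = s / 2 := by rw [hs_eq]
  have hsr : 3 * s ≤ 3 * r / 4 := by
    rw [hs_eq]
    have := mul_le_mul_of_nonneg_left h4r (by positivity : (0:ℝ) ≤ 3 * m)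
    calc 3 * (m * t) = 3 * m * t := by ring
      _ ≤ 3 * m * (r/(4*m)) := this
      _ = 3 * r / 4 := by field_simp
  have hsrlt : 3 * s < r := lt_of_le_of_lt hsr (by linarith)
  -- the fixed point map
  set F : ℂ → ℂ := fun τ => c + (φ τ ξ - (b:ℂ)*(ξ:ℂ)*τ)/((a:ℂ)*(τ+c)) with hF_def
  -- basic facts for τ in the ball
  have hball : ∀ τ ∈ ball c (A*ξ), ‖τ - c‖ ≤ s/2 ∧ ‖τ‖ ≤ 2*s ∧ s ≤ ‖τ+c‖ := by
    intro τ hτ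
    have h1 : ‖τ - c‖ < A*ξ := by rwa [mem_ball, dist_eq_norm] at hτ
    have h1' : ‖τ - c‖ ≤ s/2 := le_of_lt (lt_of_lt_of_le h1 hAξs)
    refine ⟨h1', ?_, ?_⟩
    · calc ‖τ‖ = ‖(τ - c) + c‖ := by ring_nf
        _ ≤ ‖τ - c‖ + ‖c‖ := norm_add_le _ _
        _ ≤ s/2 + s := by rw [hnormc]; linarith
        _ ≤ 2*s := by linarith
    · have h2 : ‖c + c‖ = 2*s := by
        calc ‖c + c‖ = ‖(2:ℂ) * c‖ := by ring_nf
          _ = 2 * s := by rw [norm_mul, hnormc]; norm_num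
      have h3 : ‖c + c‖ - ‖c - τ‖ ≤ ‖(c+c) - (c-τ)‖ := norm_sub_norm_le _ _
      have h4 : (c+c) - (c-τ) = τ + c := by ring
      rw [h4, h2, norm_sub_rev] at h3
      linarith
  have hball0 : ∀ τ ∈ ball c (A*ξ), τ ∈ ball (0:ℂ) r := by
    intro τ hτ
    obtain ⟨_, h2, _⟩ := hball τ hτ
    rw [mem_ball, dist_zero_right]
    calc ‖τ‖ ≤ 2*s := h2
      _ < r := by linarith
  -- numerator bound
  have hN : ∀ τ ∈ ball c (A*ξ), ‖φ τ ξ - (b:ℂ)*(ξ:ℂ)*τ‖ ≤ D * (ξ * t) := by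
    intro τ hτ
    obtain ⟨_, h2, _⟩ := hball τ hτ
    have hφ : ‖φ τ ξ‖ ≤ C₁ * (‖τ‖^3 + ξ^2) := hbound τ (hball0 τ hτ) ξ hξIoo
    have hτ3 : ‖τ‖^3 ≤ (2*s)^3 := by
      apply pow_le_pow_left₀ (norm_nonneg _) h2
    have hbτ : ‖(b:ℂ)*(ξ:ℂ)*τ‖ ≤ |b| * ξ * (2*s) := by
      rw [norm_mul, norm_mul, Complex.norm_real, Complex.norm_real, Real.norm_eq_abs,
        Real.norm_eq_abs, abs_of_pos hξ]
      exact mul_le_mul_of_nonneg_left h2 (by positivity)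
    calc ‖φ τ ξ - (b:ℂ)*(ξ:ℂ)*τ‖ ≤ ‖φ τ ξ‖ + ‖(b:ℂ)*(ξ:ℂ)*τ‖ := norm_sub_le _ _
      _ ≤ C₁ * ((2*s)^3 + ξ^2) + |b| * ξ * (2*s) := by
          have := le_trans hφ (mul_le_mul_of_nonneg_left (add_le_add_left hτ3 _) hC₁.le)
          linarith only [this, hbτ]
      _ ≤ D * (ξ * t) := by
          rw [hs_eq, hD_def]
          have h1 : ξ^2 ≤ ξ * t := by
            calc ξ^2 = ξ*ξ := sq ξ
              _ ≤ ξ*t := mul_le_mul_of_nonneg_left hξt hξ.le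
          have key : C₁ * ((2*(m*t))^3 + ξ^2) + |b| * ξ * (2*(m*t))
              = 8*C₁*m^3*(ξ*t) + C₁*ξ^2 + 2 * |b| * m*(ξ*t) := by rw [← htt]; ring
          have h2 : C₁*ξ^2 ≤ C₁*(ξ*t) := mul_le_mul_of_nonneg_left h1 hC₁.le
          rw [key]
          have h3 : 0 ≤ |b| * m*(ξ*t) := by positivity
          have h4 : 0 ≤ C₁*m^3*(ξ*t) := by positivity
          linarith only [h2, h3, h4]
  -- contraction-to-center bound
  have hFc : ∀ τ ∈ ball c (A*ξ), ‖F τ - c‖ ≤ (D/(a*m)) * ξ := by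
    intro τ hτ
    obtain ⟨_, _, h3⟩ := hball τ hτ
    have hden : a * s ≤ ‖(a:ℂ)*(τ+c)‖ := by
      rw [norm_mul, Complex.norm_real, Real.norm_of_nonneg ha.le]
      exact mul_le_mul_of_nonneg_left h3 ha.le
    have hdenpos : 0 < a * s := by positivity
    have : F τ - c = (φ τ ξ - (b:ℂ)*(ξ:ℂ)*τ)/((a:ℂ)*(τ+c)) := by rw [hF_def]; ring
    rw [this, norm_div]
    calc ‖φ τ ξ - (b:ℂ)*(ξ:ℂ)*τ‖ / ‖(a:ℂ)*(τ+c)‖ ≤ (D * (ξ * t)) / (a * s) :=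
        div_le_div₀ (by positivity) (hN τ hτ) hdenpos hden
      _ = (D/(a*m)) * ξ := by
          rw [hs_eq, ← htt]; field_simp
  -- Lipschitz bound for φ via Schwarz lemma
  have hLφ : ∀ τ ∈ ball c (A*ξ), ∀ σ ∈ ball c (A*ξ),
      ‖φ τ ξ - φ σ ξ‖ ≤ (Lc * ξ) * ‖τ - σ‖ := by
    intro τ hτ σ hσ
    set M : ℝ := C₁ * (27*s^3 + ξ^2) with hM_def
    have hM : 0 < M := by positivity
    obtain ⟨hτ1, hτ2, _⟩ := hball τ hτ
    obtain ⟨hσ1, hσ2, _⟩ := hball σ hσ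
    have hsub : ball σ s ⊆ ball (0:ℂ) r := by
      intro w hw
      rw [mem_ball, dist_eq_norm] at hw
      rw [mem_ball, dist_zero_right]
      calc ‖w‖ = ‖(w - σ) + σ‖ := by ring_nf
        _ ≤ ‖w - σ‖ + ‖σ‖ := norm_add_le _ _
        _ < s + 2*s := by linarith
        _ < r := by linarith
    have hMball : ∀ w ∈ ball σ s, ‖φ w ξ‖ ≤ M := by
      intro w hw
      have hwr := hsub hw
      rw [mem_ball, dist_eq_norm] at hw
      have hw3 : ‖w‖ ≤ 3*s := by
        calc ‖w‖ = ‖(w - σ) + σ‖ := by ring_nf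
          _ ≤ ‖w - σ‖ + ‖σ‖ := norm_add_le _ _
          _ ≤ 3*s := by linarith
      have := hbound w hwr ξ hξIoo
      have hw3' : ‖w‖^3 ≤ 27*s^3 := by
        calc ‖w‖^3 ≤ (3*s)^3 := pow_le_pow_left₀ (norm_nonneg _) hw3 3
          _ = 27*s^3 := by ring
      calc ‖φ w ξ‖ ≤ C₁ * (‖w‖^3 + ξ^2) := this
        _ ≤ M := by
            rw [hM_def]
            exact mul_le_mul_of_nonneg_left (add_le_add_left hw3' _) hC₁.le
    have hdiff : DifferentiableOn ℂ (fun w => φ w ξ) (ball σ s) :=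
      ((isOpen_ball.analyticOn_iff_analyticOnNhd.mp (hhol ξ hξIoo)).differentiableOn).mono hsub
    have hmaps : MapsTo (fun w => φ w ξ) (ball σ s) (ball (φ σ ξ) (3*M)) := by
      intro w hw
      rw [mem_ball, dist_eq_norm]
      have h1 := hMball w hw
      have h2 := hMball σ (mem_ball_self hs)
      calc ‖φ w ξ - φ σ ξ‖ ≤ ‖φ w ξ‖ + ‖φ σ ξ‖ := norm_sub_le _ _
        _ ≤ 2*M := by linarith
        _ < 3*M := by linarith
    have hτσ : τ ∈ ball σ s := by
      rw [mem_ball] at hτ hσ ⊢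
      calc dist τ σ ≤ dist τ c + dist c σ := dist_triangle _ _ _
        _ = dist τ c + dist σ c := by rw [dist_comm c σ]
        _ < A*ξ + A*ξ := add_lt_add hτ hσ
        _ ≤ s/2 + s/2 := add_le_add hAξs hAξs
        _ = s := by ring
    have hSch := Complex.dist_le_div_mul_dist_of_mapsTo_ball hdiff (hmaps.mono_right ball_subset_closedBall) hτσ
    rw [dist_eq_norm, dist_eq_norm] at hSch
    calc ‖φ τ ξ - φ σ ξ‖ ≤ 3*M/s * ‖τ - σ‖ := hSch
      _ ≤ (Lc * ξ) * ‖τ - σ‖ := by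
          apply mul_le_mul_of_nonneg_right _ (norm_nonneg _)
          rw [div_le_iff₀ hs, hM_def, hLc_def, hs_eq]
          have h1 : ξ^2 ≤ ξ * t := by
            calc ξ^2 = ξ*ξ := sq ξ
              _ ≤ ξ*t := mul_le_mul_of_nonneg_left hξt hξ.le
          have e1 : 3*(C₁*(27*(m*t)^3 + ξ^2)) = 81*C₁*m^3*(ξ*t) + 3*C₁*ξ^2 := by
            rw [← htt]; ring
          have e2 : (108*C₁*m^2 + 4*C₁/m)*ξ*(m*t) = 108*C₁*m^3*(ξ*t) + 4*C₁*(ξ*t) := by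
            field_simp
          have h2 : 3*(C₁*ξ^2) ≤ 3*(C₁*(ξ*t)) := by
            have := mul_le_mul_of_nonneg_left h1 hC₁.le; linarith
          have h3 : 0 ≤ C₁*m^3*(ξ*t) := by positivity
          calc 3*(C₁*(27*(m*t)^3 + ξ^2)) = 81*C₁*m^3*(ξ*t) + 3*(C₁*ξ^2) := by
                rw [e1]; ring
            _ ≤ 108*C₁*m^3*(ξ*t) + 4*C₁*(ξ*t) := by
                have h4 : 0 ≤ C₁*(ξ*t) := by positivity
                linarith only [h2, h3, h4]
            _ = (108*C₁*m^2 + 4*C₁/m)*ξ*(m*t) := e2.symm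
  -- Lipschitz bound for F
  have hLF : ∀ τ ∈ ball c (A*ξ), ∀ σ ∈ ball c (A*ξ),
      ‖F τ - F σ‖ ≤ (1/2) * ‖τ - σ‖ := by
    intro τ hτ σ hσ
    obtain ⟨_, _, hτ3⟩ := hball τ hτ
    obtain ⟨_, _, hσ3⟩ := hball σ hσ
    have hτne : (a:ℂ)*(τ+c) ≠ 0 := by
      intro h
      have : ‖(a:ℂ)*(τ+c)‖ = 0 := by rw [h, norm_zero]
      have h5 : a * s ≤ ‖(a:ℂ)*(τ+c)‖ := by
        rw [norm_mul, Complex.norm_real, Real.norm_of_nonneg ha.le]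
        exact mul_le_mul_of_nonneg_left hτ3 ha.le
      rw [this] at h5
      linarith only [h5, mul_pos ha hs]
    have hσne : (a:ℂ)*(σ+c) ≠ 0 := by
      intro h
      have : ‖(a:ℂ)*(σ+c)‖ = 0 := by rw [h, norm_zero]
      have h5 : a * s ≤ ‖(a:ℂ)*(σ+c)‖ := by
        rw [norm_mul, Complex.norm_real, Real.norm_of_nonneg ha.le]
        exact mul_le_mul_of_nonneg_left hσ3 ha.le
      rw [this] at h5
      linarith only [h5, mul_pos ha hs]
    have hid : F τ - F σ = ((φ τ ξ - φ σ ξ) - (b:ℂ)*(ξ:ℂ)*(τ-σ))/((a:ℂ)*(τ+c))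
        + (φ σ ξ - (b:ℂ)*(ξ:ℂ)*σ) * ((σ-τ)/(((a:ℂ)*(τ+c))*(σ+c))) := by
      rw [hF_def]
      exact aux_id2 a b ξ c τ σ (φ τ ξ) (φ σ ξ) hτne hσne
    have hdenτ : a * s ≤ ‖(a:ℂ)*(τ+c)‖ := by
      rw [norm_mul, Complex.norm_real, Real.norm_of_nonneg ha.le]
      exact mul_le_mul_of_nonneg_left hτ3 ha.le
    have hdenσ : s ≤ ‖(σ+c)‖ := hσ3
    have has : 0 < a * s := by positivity
    have hb1 : ‖((φ τ ξ - φ σ ξ) - (b:ℂ)*(ξ:ℂ)*(τ-σ))/((a:ℂ)*(τ+c))‖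
        ≤ (Lc*ξ*‖τ-σ‖ + |b| * ξ*‖τ-σ‖) / (a*s) := by
      rw [norm_div]
      apply div_le_div₀ (by positivity) _ has hdenτ
      calc ‖(φ τ ξ - φ σ ξ) - (b:ℂ)*(ξ:ℂ)*(τ-σ)‖
          ≤ ‖φ τ ξ - φ σ ξ‖ + ‖(b:ℂ)*(ξ:ℂ)*(τ-σ)‖ := norm_sub_le _ _
        _ ≤ Lc*ξ*‖τ-σ‖ + |b| * ξ*‖τ-σ‖ := by
            have h1 := hLφ τ hτ σ hσ
            have h2 : ‖(b:ℂ)*(ξ:ℂ)*(τ-σ)‖ = |b| * ξ*‖τ-σ‖ := by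
              rw [norm_mul, norm_mul, Complex.norm_real, Complex.norm_real,
                Real.norm_eq_abs, Real.norm_eq_abs, abs_of_pos hξ]
            linarith
    have hb2 : ‖(φ σ ξ - (b:ℂ)*(ξ:ℂ)*σ) * ((σ-τ)/(((a:ℂ)*(τ+c))*(σ+c)))‖
        ≤ D*(ξ*t) * (‖τ-σ‖ / ((a*s)*s)) := by
      rw [norm_mul, norm_div, norm_mul]
      apply mul_le_mul (hN σ hσ) _ (by positivity) (by positivity)
      rw [norm_sub_rev σ τ]
      apply div_le_div₀ (by positivity) le_rfl (by positivity)
      exact mul_le_mul hdenτ hdenσ hs.le (norm_nonneg _)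
    have hsum : ‖F τ - F σ‖ ≤ (Lc*ξ*‖τ-σ‖ + |b| * ξ*‖τ-σ‖) / (a*s)
        + D*(ξ*t) * (‖τ-σ‖ / ((a*s)*s)) := by
      rw [hid]
      exact le_trans (norm_add_le _ _) (add_le_add hb1 hb2)
    have hcoef : (Lc*ξ*‖τ-σ‖ + |b| * ξ*‖τ-σ‖) / (a*s) + D*(ξ*t) * (‖τ-σ‖ / ((a*s)*s))
        = (E * t) * ‖τ-σ‖ := by
      rw [hE_def, hs_eq, ← htt]
      exact aux_coef Lc |b| D a m t _ ha.ne' hm.ne' htpos.ne'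
    have hEt : E * t ≤ 1/2 := by
      have := mul_le_mul_of_nonneg_left h2E hE.le
      calc E * t ≤ E * (1/(2*E)) := this
        _ = 1/2 := by field_simp
    calc ‖F τ - F σ‖ ≤ (E * t) * ‖τ-σ‖ := by rw [← hcoef]; exact hsum
      _ ≤ (1/2) * ‖τ-σ‖ := mul_le_mul_of_nonneg_right hEt (norm_nonneg _)
  -- equation ↔ fixed point
  have heqiff : ∀ τ ∈ ball c (A*ξ),
      ((a:ℂ)*τ^2 + (b:ℂ)*(ξ:ℂ)*τ + (e:ℂ)*(ξ:ℂ) = φ τ ξ ↔ F τ = τ) := by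
    intro τ hτ
    obtain ⟨_, _, hτ3⟩ := hball τ hτ
    have hτne : (a:ℂ)*(τ+c) ≠ 0 := by
      intro h
      have h0 : ‖(a:ℂ)*(τ+c)‖ = 0 := by rw [h, norm_zero]
      have h5 : a * s ≤ ‖(a:ℂ)*(τ+c)‖ := by
        rw [norm_mul, Complex.norm_real, Real.norm_of_nonneg ha.le]
        exact mul_le_mul_of_nonneg_left hτ3 ha.le
      rw [h0] at h5
      linarith only [h5, mul_pos ha hs]
    have hdiv : F τ - τ
        = (φ τ ξ - ((a:ℂ)*τ^2 + (b:ℂ)*(ξ:ℂ)*τ + (e:ℂ)*(ξ:ℂ)))/((a:ℂ)*(τ+c)) := by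
      rw [hF_def]
      exact aux_id1 a b e ξ c τ (φ τ ξ) hc2 hτne
    constructor
    · intro h
      have h0 : F τ - τ = 0 := by rw [hdiv, h]; simp
      exact sub_eq_zero.mp h0
    · intro h
      have h0 : (φ τ ξ - ((a:ℂ)*τ^2 + (b:ℂ)*(ξ:ℂ)*τ + (e:ℂ)*(ξ:ℂ)))/((a:ℂ)*(τ+c)) = 0 := by
        rw [← hdiv, h, sub_self]
      have h1 := (div_eq_zero_iff.mp h0).resolve_right hτne
      have := sub_eq_zero.mp h1
      exact this.symm
  -- existence via contraction on the closed ball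
  set S : Set ℂ := closedBall c (A*ξ/2) with hS_def
  have hSsub : S ⊆ ball c (A*ξ) := closedBall_subset_ball (half_lt_self (mul_pos hA hξ))
  have hmapsF : MapsTo F S S := by
    intro τ hτ
    have h1 := hFc τ (hSsub hτ)
    rw [hS_def, mem_closedBall, dist_eq_norm]
    calc ‖F τ - c‖ ≤ (D/(a*m)) * ξ := h1
      _ ≤ A*ξ/2 := by
          have hx : D/(a*m) ≤ A/2 := by
            rw [hA_def]
            have h9 : (2*(D/(a*m))+1)/2 = D/(a*m) + 1/2 := by ring
            have h10 : 2*D/(a*m) = 2*(D/(a*m)) := by ring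
            rw [h10, h9]
            exact le_add_of_nonneg_right (by norm_num)
          calc (D/(a*m))*ξ ≤ (A/2)*ξ := mul_le_mul_of_nonneg_right hx hξ.le
            _ = A*ξ/2 := by ring
  have hLip : LipschitzOnWith (1/2 : ℝ≥0) F S := by
    apply LipschitzOnWith.of_dist_le_mul
    intro x hx y hy
    rw [dist_eq_norm, dist_eq_norm]
    have := hLF x (hSsub hx) y (hSsub hy)
    calc ‖F x - F y‖ ≤ (1/2) * ‖x - y‖ := this
      _ = ((1/2 : ℝ≥0) : ℝ) * ‖x - y‖ := by norm_num
  have hcontr : ContractingWith (1/2 : ℝ≥0) (hmapsF.restrict F S S) :=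
    ⟨by rw [← NNReal.coe_lt_coe]; norm_num, hLip.mapsToRestrict hmapsF⟩
  have hcomp : IsComplete S := Metric.isClosed_closedBall.isComplete
  have hcS : c ∈ S := mem_closedBall_self (by positivity)
  set τs : ℂ := ContractingWith.efixedPoint' F hcomp hmapsF hcontr c hcS (edist_ne_top _ _)
    with hτs_def
  have hτsS : τs ∈ S := ContractingWith.efixedPoint_mem' hcomp hmapsF hcontr hcS _
  have hτsfix : F τs = τs := ContractingWith.efixedPoint_isFixedPt' hcomp hmapsF hcontr hcS _
  have hτsball : τs ∈ ball c (A*ξ) := hSsub hτsS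
  refine ⟨⟨τs, ⟨hτsball, (heqiff τs hτsball).mpr hτsfix⟩, ?_⟩, ?_⟩
  · rintro y ⟨hy, hyeq⟩
    have hyfix : F y = y := (heqiff y hy).mp hyeq
    have h1 := hLF y hy τs hτsball
    rw [hyfix, hτsfix] at h1
    have : ‖y - τs‖ = 0 := by linarith only [h1, norm_nonneg (y - τs)]
    have := norm_sub_eq_zero_iff.mp this
    exact this
  · intro τ hτ _
    have h1 : ‖τ - c‖ < A*ξ := by rwa [mem_ball, dist_eq_norm] at hτ
    have hre : (τ - c).re = τ.re := by
      simp [hc_def, Complex.sub_re, Complex.mul_re]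
    have him : (τ - c).im = τ.im - s := by
      simp [hc_def, Complex.sub_im, Complex.mul_im]
    constructor
    · rw [← hre]
      exact le_of_lt (lt_of_le_of_lt (Complex.abs_re_le_norm _) h1)
    · rw [← him]
      exact le_of_lt (lt_of_le_of_lt (Complex.abs_im_le_norm _) h1)
end

section
/- Let d > 0 and f : ℝ → ℝ be C¹ with f(0) = f(1) = 0, 0 < f(s) ≤ f'(0)s for s ∈ (0,1), and f(s) < 0 for s > 1. If V : [0,∞) → ℝ is a bounded C² function satisfying −dV'' = f(V) on (0,∞), V'(0) = 0, and inf V > 0, then V ≡ 1. -/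
theorem stmt_11 (d : ℝ) (hd : 0 < d) (f : ℝ → ℝ) (hf : ContDiff ℝ 1 f)
    (hf0 : f 0 = 0) (hf1 : f 1 = 0)
    (hfpos : ∀ s ∈ Set.Ioo (0:ℝ) 1, 0 < f s ∧ f s ≤ deriv f 0 * s)
    (hfneg : ∀ s : ℝ, 1 < s → f s < 0)
    (V : ℝ → ℝ) (hV : ContDiffOn ℝ 2 V (Set.Ici 0))
    (hbdd : ∃ M : ℝ, ∀ y ≥ (0:ℝ), |V y| ≤ M)
    (hode : ∀ y > (0:ℝ), -d * deriv (deriv V) y = f (V y))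
    (hneu : derivWithin V (Set.Ici 0) 0 = 0)
    (hinf : ∃ m > (0:ℝ), ∀ y ≥ (0:ℝ), m ≤ V y) :
    ∀ y ≥ (0:ℝ), V y = 1 := by
  obtain ⟨M, hM⟩ := hbdd
  obtain ⟨m, hm, hmle⟩ := hinf
  have hVc : ContinuousOn V (Set.Ici 0) := hV.continuousOn
  have hd2 : ContDiffOn ℝ 2 V (Set.Ioi 0) := hV.mono Set.Ioi_subset_Ici_self
  have hVdiff : ∀ z : ℝ, 0 < z → DifferentiableAt ℝ V z := fun z hz =>
    ((hd2.differentiableOn (by norm_num)) z hz).differentiableAt (isOpen_Ioi.mem_nhds hz)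
  have hV'cont : ContinuousOn (deriv V) (Set.Ioi 0) :=
    hd2.continuousOn_deriv_of_isOpen isOpen_Ioi (by norm_num)
  have ddneg : ∀ z : ℝ, 0 < z → V z < 1 → deriv (deriv V) z < 0 := by
    intro z hz hlt
    have h := hode z hz
    have hf' : 0 < f (V z) := (hfpos (V z) ⟨lt_of_lt_of_le hm (hmle z hz.le), hlt⟩).1
    nlinarith
  have ddpos : ∀ z : ℝ, 0 < z → 1 < V z → 0 < deriv (deriv V) z := by
    intro z hz hgt
    have h := hode z hz
    have hf' : f (V z) < 0 := hfneg (V z) hgt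
    nlinarith
  have anti : ∀ a b : ℝ, 0 < a → (∀ w ∈ Set.Ioo a b, V w < 1) →
      StrictAntiOn (deriv V) (Set.Icc a b) := by
    intro a b ha hlt
    apply strictAntiOn_of_deriv_neg (convex_Icc a b)
    · exact hV'cont.mono fun w hw => lt_of_lt_of_le ha hw.1
    · intro x hx
      rw [interior_Icc] at hx
      exact ddneg x (lt_trans ha hx.1) (hlt x hx)
  have mono : ∀ a b : ℝ, 0 < a → (∀ w ∈ Set.Ioo a b, 1 < V w) →
      StrictMonoOn (deriv V) (Set.Icc a b) := by
    intro a b ha hlt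
    apply strictMonoOn_of_deriv_pos (convex_Icc a b)
    · exact hV'cont.mono fun w hw => lt_of_lt_of_le ha hw.1
    · intro x hx
      rw [interior_Icc] at hx
      exact ddpos x (lt_trans ha hx.1) (hlt x hx)
  have hlinderiv : ∀ (δ x : ℝ), deriv (fun w => δ * w) x = δ := fun δ x => by
    simpa using ((hasDerivAt_id x).const_mul δ).deriv
  have growth : ∀ a b δ : ℝ, 0 ≤ a → a ≤ b → (∀ w ∈ Set.Ioo a b, δ ≤ deriv V w) →
      V a + δ * (b - a) ≤ V b := by
    intro a b δ ha hab hbd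
    have hsub : Set.Icc a b ⊆ Set.Ici (0:ℝ) := fun w hw => le_trans ha hw.1
    have hmono : MonotoneOn (fun w => V w - δ * w) (Set.Icc a b) := by
      apply monotoneOn_of_deriv_nonneg (convex_Icc a b)
      · exact (hVc.mono hsub).sub ((continuous_const.mul continuous_id).continuousOn)
      · intro x hx
        rw [interior_Icc] at hx
        exact ((hVdiff x (lt_of_le_of_lt ha hx.1)).sub
          (differentiableAt_id.const_mul δ)).differentiableWithinAt
      · intro x hx
        rw [interior_Icc] at hx
        have hidd : HasDerivAt (fun w : ℝ => δ * w) δ x := by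
          simpa using (hasDerivAt_id x).const_mul δ
        have hD : HasDerivAt (fun w => V w - δ * w) (deriv V x - δ) x :=
          ((hVdiff x (lt_of_le_of_lt ha hx.1)).hasDerivAt).sub hidd
        rw [hD.deriv]
        linarith [hbd x hx]
    have h2 : V a - δ * a ≤ V b - δ * b := hmono ⟨le_refl a, hab⟩ ⟨hab, le_refl b⟩ hab
    linarith
  have decay : ∀ a b δ : ℝ, 0 ≤ a → a ≤ b → (∀ w ∈ Set.Ioo a b, deriv V w ≤ -δ) →
      V b ≤ V a - δ * (b - a) := by
    intro a b δ ha hab hbd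
    have hsub : Set.Icc a b ⊆ Set.Ici (0:ℝ) := fun w hw => le_trans ha hw.1
    have hmono : AntitoneOn (fun w => V w + δ * w) (Set.Icc a b) := by
      apply antitoneOn_of_deriv_nonpos (convex_Icc a b)
      · exact (hVc.mono hsub).add ((continuous_const.mul continuous_id).continuousOn)
      · intro x hx
        rw [interior_Icc] at hx
        exact ((hVdiff x (lt_of_le_of_lt ha hx.1)).add
          (differentiableAt_id.const_mul δ)).differentiableWithinAt
      · intro x hx
        rw [interior_Icc] at hx
        have hidd : HasDerivAt (fun w : ℝ => δ * w) δ x := by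
          simpa using (hasDerivAt_id x).const_mul δ
        have hD : HasDerivAt (fun w => V w + δ * w) (deriv V x + δ) x :=
          ((hVdiff x (lt_of_le_of_lt ha hx.1)).hasDerivAt).add hidd
        rw [hD.deriv]
        linarith [hbd x hx]
    have h2 : V b + δ * b ≤ V a + δ * a := hmono ⟨le_refl a, hab⟩ ⟨hab, le_refl b⟩ hab
    linarith
  have hders : HasDerivWithinAt V 0 (Set.Ici 0) 0 := by
    have h := ((hV.differentiableOn (by norm_num)) 0 Set.self_mem_Ici).hasDerivWithinAt
    rwa [hneu] at h
  have hIci : Set.Ici (0:ℝ) \ {0} = Set.Ioi (0:ℝ) := by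
    ext x
    simp only [Set.mem_diff, Set.mem_singleton_iff, Set.mem_Ici, Set.mem_Ioi]
    constructor
    · rintro ⟨h1, h2⟩
      exact lt_of_le_of_ne h1 (Ne.symm h2)
    · intro hx
      exact ⟨hx.le, hx.ne'⟩
  have hslope : Filter.Tendsto (slope V 0) (nhdsWithin 0 (Set.Ioi 0)) (nhds 0) := by
    have h := hasDerivWithinAt_iff_tendsto_slope.mp hders
    rwa [hIci] at h
  have hslope_eq : ∀ h : ℝ, 0 < h → slope V 0 h = (V h - V 0) / h := by
    intro h hh
    rw [slope_def_field, sub_zero]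
  have noslope_pos : ∀ ε : ℝ, 0 < ε → ∀ b : ℝ, 0 < b →
      (∀ h ∈ Set.Ioc (0:ℝ) b, ε * h ≤ V h - V 0) → False := by
    intro ε hε b hb hbound
    have hev : ∀ᶠ h in nhdsWithin 0 (Set.Ioi 0), ε ≤ slope V 0 h := by
      filter_upwards [Ioc_mem_nhdsGT_of_mem (Set.left_mem_Ico.mpr hb)] with h hh
      rw [hslope_eq h hh.1, le_div_iff₀ hh.1]
      exact hbound h hh
    linarith [ge_of_tendsto hslope hev]
  have noslope_neg : ∀ ε : ℝ, 0 < ε → ∀ b : ℝ, 0 < b →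
      (∀ h ∈ Set.Ioc (0:ℝ) b, V h - V 0 ≤ -(ε * h)) → False := by
    intro ε hε b hb hbound
    have hev : ∀ᶠ h in nhdsWithin 0 (Set.Ioi 0), slope V 0 h ≤ -ε := by
      filter_upwards [Ioc_mem_nhdsGT_of_mem (Set.left_mem_Ico.mpr hb)] with h hh
      rw [hslope_eq h hh.1, div_le_iff₀ hh.1]
      have := hbound h hh
      linarith
    linarith [le_of_tendsto hslope hev]
  have key : ∀ z : ℝ, 0 < z → V z = 1 := by
    intro z hz
    by_contra hne
    rcases lt_or_gt_of_ne hne with hlt | hgt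
    · -- V z < 1
      rcases le_or_gt (deriv V z) 0 with hdz | hdz
      · -- Case A : slide down to -∞
        have step1 : ∀ w : ℝ, z ≤ w → V w < 1 := by
          by_contra hcon
          push_neg at hcon
          obtain ⟨w, hwz, hw1⟩ := hcon
          have hclosed : IsClosed (Set.Ici z ∩ V ⁻¹' Set.Ici 1) :=
            (hVc.mono fun t ht => le_trans hz.le ht).preimage_isClosed_of_isClosed
              isClosed_Ici isClosed_Ici
          have hne' : (Set.Ici z ∩ V ⁻¹' Set.Ici 1).Nonempty := ⟨w, hwz, hw1⟩
          have hbdd' : BddBelow (Set.Ici z ∩ V ⁻¹' Set.Ici 1) := ⟨z, fun t ht => ht.1⟩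
          have hy1 := hclosed.csInf_mem hne' hbdd'
          set y1 := sInf (Set.Ici z ∩ V ⁻¹' Set.Ici 1) with hy1def
          have hV1 : (1:ℝ) ≤ V y1 := hy1.2
          have hzy1 : z < y1 := by
            rcases lt_or_eq_of_le (Set.mem_Ici.mp hy1.1 : z ≤ y1) with h | h
            · exact h
            · exfalso; rw [← h] at hV1; linarith
          have hIoo : ∀ t ∈ Set.Ioo z y1, V t < 1 := by
            intro t ht
            by_contra h1
            push_neg at h1
            exact absurd (csInf_le hbdd' ⟨ht.1.le, h1⟩) (not_le.mpr ht.2)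
          have hdle : ∀ t ∈ Set.Ioo z y1, deriv V t ≤ -0 := by
            intro t ht
            have h2 := anti z y1 hz hIoo ⟨le_refl z, hzy1.le⟩ ⟨ht.1.le, ht.2.le⟩ ht.1
            simp only [neg_zero]
            linarith
          have h3 := decay z y1 0 hz.le hzy1.le hdle
          nlinarith
        have hd1 : deriv V (z+1) < deriv V z :=
          anti z (z+1) hz (fun t ht => step1 t ht.1.le)
            ⟨le_refl z, by linarith⟩ ⟨by linarith, le_refl _⟩ (by linarith)
        set δ := -deriv V (z+1) with hδdef
        have hδ : 0 < δ := by rw [hδdef]; linarith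
        have hVz1m : m ≤ V (z+1) := hmle (z+1) (by linarith)
        have hfrac : 0 < (V (z+1) - m + 1)/δ := div_pos (by linarith) hδ
        set b := (z+1) + (V (z+1) - m + 1)/δ with hbdef
        have hzb : z+1 ≤ b := by rw [hbdef]; linarith
        have hdle : ∀ t ∈ Set.Ioo (z+1) b, deriv V t ≤ -δ := by
          intro t ht
          have h2 := anti (z+1) b (by linarith) (fun s hs => step1 s (by linarith [hs.1]))
            ⟨le_refl _, hzb⟩ ⟨ht.1.le, ht.2.le⟩ ht.1
          rw [hδdef]; linarith
        have hdec := decay (z+1) b δ (by linarith) hzb hdle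
        have harith : δ * (b - (z+1)) = V (z+1) - m + 1 := by
          rw [hbdef]
          field_simp
          ring
        have hmb : m ≤ V b := hmle b (by linarith)
        linarith
      · -- Case C : contradiction with Neumann
        have step1 : ∀ w ∈ Set.Icc (0:ℝ) z, V w < 1 := by
          by_contra hcon
          push_neg at hcon
          obtain ⟨w, hw, hw1⟩ := hcon
          have hclosed : IsClosed (Set.Icc (0:ℝ) z ∩ V ⁻¹' Set.Ici 1) :=
            (hVc.mono fun t ht => ht.1).preimage_isClosed_of_isClosed isClosed_Icc isClosed_Ici
          have hcomp : IsCompact (Set.Icc (0:ℝ) z ∩ V ⁻¹' Set.Ici 1) :=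
            isCompact_Icc.of_isClosed_subset hclosed Set.inter_subset_left
          have hne' : (Set.Icc (0:ℝ) z ∩ V ⁻¹' Set.Ici 1).Nonempty := ⟨w, hw, hw1⟩
          have hy1 := hcomp.sSup_mem hne'
          set y1 := sSup (Set.Icc (0:ℝ) z ∩ V ⁻¹' Set.Ici 1) with hy1def
          have hV1 : (1:ℝ) ≤ V y1 := hy1.2
          have hy10 : (0:ℝ) ≤ y1 := hy1.1.1
          have hy1z : y1 < z := by
            rcases lt_or_eq_of_le (hy1.1.2 : y1 ≤ z) with h | h
            · exact h
            · exfalso; rw [h] at hV1; linarith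
          have hIoo : ∀ t ∈ Set.Ioo y1 z, V t < 1 := by
            intro t ht
            by_contra h1
            push_neg at h1
            exact absurd (le_csSup hcomp.bddAbove ⟨⟨le_trans hy10 ht.1.le, ht.2.le⟩, h1⟩)
              (not_le.mpr ht.1)
          have hge : ∀ t ∈ Set.Ioo y1 z, (0:ℝ) ≤ deriv V t := by
            intro t ht
            have h0t : 0 < t := lt_of_le_of_lt hy10 ht.1
            have h2 := anti t z h0t (fun s hs => hIoo s ⟨lt_trans ht.1 hs.1, hs.2⟩)
              ⟨le_refl t, ht.2.le⟩ ⟨ht.2.le, le_refl z⟩ ht.2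
            linarith
          have h3 := growth y1 z 0 hy10 hy1z.le hge
          nlinarith
        have hge : ∀ t ∈ Set.Ioo (0:ℝ) z, deriv V z ≤ deriv V t := by
          intro t ht
          exact (anti t z ht.1 (fun s hs => step1 s ⟨(lt_trans ht.1 hs.1).le, hs.2.le⟩)
            ⟨le_refl t, ht.2.le⟩ ⟨ht.2.le, le_refl z⟩ ht.2).le
        apply noslope_pos (deriv V z) hdz z hz
        intro h hh
        have h3 := growth 0 h (deriv V z) (le_refl 0) hh.1.le
          (fun t ht => hge t ⟨ht.1, lt_of_lt_of_le ht.2 hh.2⟩)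
        linarith
    · -- V z > 1
      rcases le_or_gt 0 (deriv V z) with hdz | hdz
      · -- Case B : climb to +∞
        have step1 : ∀ w : ℝ, z ≤ w → 1 < V w := by
          by_contra hcon
          push_neg at hcon
          obtain ⟨w, hwz, hw1⟩ := hcon
          have hclosed : IsClosed (Set.Ici z ∩ V ⁻¹' Set.Iic 1) :=
            (hVc.mono fun t ht => le_trans hz.le ht).preimage_isClosed_of_isClosed
              isClosed_Ici isClosed_Iic
          have hne' : (Set.Ici z ∩ V ⁻¹' Set.Iic 1).Nonempty := ⟨w, hwz, hw1⟩
          have hbdd' : BddBelow (Set.Ici z ∩ V ⁻¹' Set.Iic 1) := ⟨z, fun t ht => ht.1⟩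
          have hy1 := hclosed.csInf_mem hne' hbdd'
          set y1 := sInf (Set.Ici z ∩ V ⁻¹' Set.Iic 1) with hy1def
          have hV1 : V y1 ≤ 1 := hy1.2
          have hzy1 : z < y1 := by
            rcases lt_or_eq_of_le (Set.mem_Ici.mp hy1.1 : z ≤ y1) with h | h
            · exact h
            · exfalso; rw [← h] at hV1; linarith
          have hIoo : ∀ t ∈ Set.Ioo z y1, 1 < V t := by
            intro t ht
            by_contra h1
            push_neg at h1
            exact absurd (csInf_le hbdd' ⟨ht.1.le, h1⟩) (not_le.mpr ht.2)
          have hdge : ∀ t ∈ Set.Ioo z y1, (0:ℝ) ≤ deriv V t := by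
            intro t ht
            have h2 := mono z y1 hz hIoo ⟨le_refl z, hzy1.le⟩ ⟨ht.1.le, ht.2.le⟩ ht.1
            linarith
          have h3 := growth z y1 0 hz.le hzy1.le hdge
          nlinarith
        have hd1 : deriv V z < deriv V (z+1) :=
          mono z (z+1) hz (fun t ht => step1 t ht.1.le)
            ⟨le_refl z, by linarith⟩ ⟨by linarith, le_refl _⟩ (by linarith)
        set δ := deriv V (z+1) with hδdef
        have hδ : 0 < δ := by rw [hδdef]; linarith
        have hVz1M : V (z+1) ≤ M := (abs_le.mp (hM (z+1) (by linarith))).2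
        have hfrac : 0 < (M - V (z+1) + 1)/δ := div_pos (by linarith) hδ
        set b := (z+1) + (M - V (z+1) + 1)/δ with hbdef
        have hzb : z+1 ≤ b := by rw [hbdef]; linarith
        have hdge : ∀ t ∈ Set.Ioo (z+1) b, δ ≤ deriv V t := by
          intro t ht
          have h2 := mono (z+1) b (by linarith) (fun s hs => step1 s (by linarith [hs.1]))
            ⟨le_refl _, hzb⟩ ⟨ht.1.le, ht.2.le⟩ ht.1
          rw [hδdef]; linarith
        have hgro := growth (z+1) b δ (by linarith) hzb hdge
        have harith : δ * (b - (z+1)) = M - V (z+1) + 1 := by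
          rw [hbdef]
          field_simp
          ring
        have hMb : V b ≤ M := (abs_le.mp (hM b (by linarith))).2
        linarith
      · -- Case D : contradiction with Neumann
        have step1 : ∀ w ∈ Set.Icc (0:ℝ) z, 1 < V w := by
          by_contra hcon
          push_neg at hcon
          obtain ⟨w, hw, hw1⟩ := hcon
          have hclosed : IsClosed (Set.Icc (0:ℝ) z ∩ V ⁻¹' Set.Iic 1) :=
            (hVc.mono fun t ht => ht.1).preimage_isClosed_of_isClosed isClosed_Icc isClosed_Iic
          have hcomp : IsCompact (Set.Icc (0:ℝ) z ∩ V ⁻¹' Set.Iic 1) :=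
            isCompact_Icc.of_isClosed_subset hclosed Set.inter_subset_left
          have hne' : (Set.Icc (0:ℝ) z ∩ V ⁻¹' Set.Iic 1).Nonempty := ⟨w, hw, hw1⟩
          have hy1 := hcomp.sSup_mem hne'
          set y1 := sSup (Set.Icc (0:ℝ) z ∩ V ⁻¹' Set.Iic 1) with hy1def
          have hV1 : V y1 ≤ 1 := hy1.2
          have hy10 : (0:ℝ) ≤ y1 := hy1.1.1
          have hy1z : y1 < z := by
            rcases lt_or_eq_of_le (hy1.1.2 : y1 ≤ z) with h | h
            · exact h
            · exfalso; rw [h] at hV1; linarith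
          have hIoo : ∀ t ∈ Set.Ioo y1 z, 1 < V t := by
            intro t ht
            by_contra h1
            push_neg at h1
            exact absurd (le_csSup hcomp.bddAbove ⟨⟨le_trans hy10 ht.1.le, ht.2.le⟩, h1⟩)
              (not_le.mpr ht.1)
          have hdle : ∀ t ∈ Set.Ioo y1 z, deriv V t ≤ -0 := by
            intro t ht
            have h0t : 0 < t := lt_of_le_of_lt hy10 ht.1
            have h2 := mono t z h0t (fun s hs => hIoo s ⟨lt_trans ht.1 hs.1, hs.2⟩)
              ⟨le_refl t, ht.2.le⟩ ⟨ht.2.le, le_refl z⟩ ht.2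
            simp only [neg_zero]
            linarith
          have h3 := decay y1 z 0 hy10 hy1z.le hdle
          nlinarith
        have hle : ∀ t ∈ Set.Ioo (0:ℝ) z, deriv V t ≤ deriv V z := by
          intro t ht
          exact (mono t z ht.1 (fun s hs => step1 s ⟨(lt_trans ht.1 hs.1).le, hs.2.le⟩)
            ⟨le_refl t, ht.2.le⟩ ⟨ht.2.le, le_refl z⟩ ht.2).le
        apply noslope_neg (-(deriv V z)) (by linarith) z hz
        intro h hh
        have h3 := decay 0 h (-(deriv V z)) (le_refl 0) hh.1.le
          (fun t ht => by
            have := hle t ⟨ht.1, lt_of_lt_of_le ht.2 hh.2⟩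
            linarith)
        nlinarith
  intro y hy
  rcases eq_or_lt_of_le hy with h0 | h0
  · rw [← h0]
    have hc : ContinuousWithinAt V (Set.Ici 0) 0 := hVc 0 Set.self_mem_Ici
    have ht : Filter.Tendsto V (nhdsWithin 0 (Set.Ioi 0)) (nhds (V 0)) :=
      hc.tendsto.mono_left (nhdsWithin_mono 0 Set.Ioi_subset_Ici_self)
    have ht1 : Filter.Tendsto V (nhdsWithin (0:ℝ) (Set.Ioi 0)) (nhds 1) := by
      apply Filter.Tendsto.congr' _ tendsto_const_nhds
      filter_upwards [self_mem_nhdsWithin] with t htt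
      exact (key t htt).symm
    exact tendsto_nhds_unique ht ht1
  · exact key y h0
end

section
/- Let μ, d, f₀ > 0 (with f₀ standing for f'(0)). Consider the limiting system in unknowns (α, β, c): α² − cα = dβμ/(1+dβ) and α = (f₀ + dβ²)/c, for β > −1/d, α, c > 0. Then there exists a unique c_* > 0 such that the system has exactly one solution (α, β) when c = c_*, no solution with the curves tangent for c < c_* where the parabola lies strictly above the other curve, and at least two solutions for c > c_*. -/
open Set

namespace Stmt13

noncomputable section

variable (d μ f0 : ℝ)

def FF (β : ℝ) : ℝ := f0 + d * β ^ 2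
def HH (β : ℝ) : ℝ := (f0 + d * β ^ 2) ^ 2 * (1 + d * β)
def KK (β : ℝ) : ℝ := (f0 + d * β ^ 2) * (1 + d * β) + d * β * μ
def PHI (β : ℝ) : ℝ := 2 * β * (f0 + d * β ^ 2) * (1 + d * β) ^ 2
    + μ * (3 * d * β ^ 2 + 4 * d ^ 2 * β ^ 3) - μ * f0
def hh (β : ℝ) : ℝ := HH d f0 β / KK d μ f0 β

lemma contHH : Continuous (HH d f0) := by unfold HH; continuity
lemma contKK : Continuous (KK d μ f0) := by unfold KK; continuity
lemma contPHI : Continuous (PHI d μ f0) := by unfold PHI; continuity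

lemma FF_pos (hd : 0 < d) (hf0 : 0 < f0) (β : ℝ) : 0 < FF d f0 β := by
  unfold FF; nlinarith [sq_nonneg β]

lemma KK_ge (hd : 0 < d) (hμ : 0 < μ) (hf0 : 0 < f0) {β : ℝ} (hβ : 0 ≤ β) :
    f0 ≤ KK d μ f0 β := by
  unfold KK; nlinarith [mul_nonneg (mul_nonneg hd.le hβ) hμ.le, mul_nonneg hd.le (pow_nonneg hβ 2), mul_nonneg (mul_nonneg hd.le hβ) hf0.le, mul_nonneg (mul_nonneg (mul_nonneg hd.le hd.le) (pow_nonneg hβ 3)) hβ, mul_nonneg (mul_nonneg hd.le hd.le) (pow_nonneg hβ 3)]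

lemma hasDerivAt_HH (β : ℝ) :
    HasDerivAt (HH d f0)
      (d * (FF d f0 β) ^ 2 + 4 * d * β * (FF d f0 β) * (1 + d * β)) β := by
  have h1 : HasDerivAt (fun x : ℝ => f0 + d * x ^ 2) (2 * d * β) β := by
    have := ((hasDerivAt_pow 2 β).const_mul d).const_add f0
    refine this.congr_deriv ?_
    push_cast; ring
  have h2 : HasDerivAt (fun x : ℝ => 1 + d * x) d β := by
    have := ((hasDerivAt_id β).const_mul d).const_add 1
    refine this.congr_deriv ?_
    simp
  have := (h1.pow 2).mul h2
  refine this.congr_deriv ?_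
  unfold FF; simp only [Pi.pow_apply]; push_cast; ring

lemma hasDerivAt_KK (β : ℝ) :
    HasDerivAt (KK d μ f0)
      (2 * d * β * (1 + d * β) + d * (FF d f0 β) + d * μ) β := by
  have h1 : HasDerivAt (fun x : ℝ => f0 + d * x ^ 2) (2 * d * β) β := by
    have := ((hasDerivAt_pow 2 β).const_mul d).const_add f0
    refine this.congr_deriv ?_
    push_cast; ring
  have h2 : HasDerivAt (fun x : ℝ => 1 + d * x) d β := by
    have := ((hasDerivAt_id β).const_mul d).const_add 1
    refine this.congr_deriv ?_
    simp
  have h3 : HasDerivAt (fun x : ℝ => d * x * μ) (d * μ) β := by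
    have := ((hasDerivAt_id β).const_mul d).mul_const μ
    refine this.congr_deriv ?_
    simp
  have := (h1.mul h2).add h3
  refine this.congr_deriv ?_
  unfold FF; ring

lemma hasDerivAt_hh {β : ℝ} (hK : KK d μ f0 β ≠ 0) :
    HasDerivAt (hh d μ f0)
      (d * FF d f0 β * PHI d μ f0 β / (KK d μ f0 β) ^ 2) β := by
  have := (hasDerivAt_HH d f0 β).div (hasDerivAt_KK d μ f0 β) hK
  refine this.congr_deriv ?_
  unfold FF PHI HH KK
  ring


lemma PHI_strictMonoOn (hd : 0 < d) (hμ : 0 < μ) (hf0 : 0 < f0) :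
    StrictMonoOn (PHI d μ f0) (Ici 0) := by
  intro a ha b hb hab
  simp only [mem_Ici] at ha hb
  unfold PHI
  have h1 : 2 * a * (f0 + d * a ^ 2) * (1 + d * a) ^ 2
      ≤ 2 * b * (f0 + d * b ^ 2) * (1 + d * b) ^ 2 := by gcongr
  have h2 : μ * (3 * d * a ^ 2 + 4 * d ^ 2 * a ^ 3)
      < μ * (3 * d * b ^ 2 + 4 * d ^ 2 * b ^ 3) := by
    have ha2 : a ^ 2 < b ^ 2 := by nlinarith
    have ha3 : a ^ 3 < b ^ 3 := by nlinarith
    have key : 0 < 3 * d * (b ^ 2 - a ^ 2) + 4 * d ^ 2 * (b ^ 3 - a ^ 3) := by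
      have : (0:ℝ) < d ^ 2 := by positivity
      nlinarith
    nlinarith [mul_pos hμ key]
  linarith

lemma PHI_zero (hμ : 0 < μ) (hf0 : 0 < f0) : PHI d μ f0 0 < 0 := by
  unfold PHI; nlinarith [mul_pos hμ hf0]

lemma PHI_mu (hd : 0 < d) (hμ : 0 < μ) (hf0 : 0 < f0) : 0 < PHI d μ f0 μ := by
  unfold PHI
  have h1 : (1:ℝ) ≤ (1 + d * μ) ^ 2 := by nlinarith [mul_pos hd hμ, sq_nonneg (d*μ)]
  have h2 : 0 < f0 + d * μ ^ 2 := by positivity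
  nlinarith [mul_pos hμ h2,
    mul_nonneg (by linarith : (0:ℝ) ≤ (1 + d * μ) ^ 2 - 1)
      (by positivity : (0:ℝ) ≤ 2 * μ * (f0 + d * μ ^ 2)),
    mul_pos hμ hf0, mul_pos hμ (mul_pos hd (mul_pos hμ hμ))]

/-- the unique positive critical point -/
lemma exists_bstar (hd : 0 < d) (hμ : 0 < μ) (hf0 : 0 < f0) :
    ∃ b : ℝ, 0 < b ∧ b ≤ μ ∧ PHI d μ f0 b = 0 := by
  have hsub : Icc (PHI d μ f0 0) (PHI d μ f0 μ) ⊆ PHI d μ f0 '' Icc 0 μ :=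
    intermediate_value_Icc hμ.le ((contPHI d μ f0).continuousOn)
  obtain ⟨b, hb, hval⟩ := hsub ⟨(PHI_zero d μ f0 hμ hf0).le, (PHI_mu d μ f0 hd hμ hf0).le⟩
  refine ⟨b, ?_, hb.2, hval⟩
  rcases lt_or_eq_of_le hb.1 with h | h
  · exact h
  · exfalso; rw [← h] at hval; exact absurd hval (PHI_zero d μ f0 hμ hf0).ne


lemma KK_pos (hd : 0 < d) (hμ : 0 < μ) (hf0 : 0 < f0) {β : ℝ} (hβ : 0 ≤ β) :
    0 < KK d μ f0 β := lt_of_lt_of_le hf0 (KK_ge d μ f0 hd hμ hf0 hβ)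

lemma hh_anti (hd : 0 < d) (hμ : 0 < μ) (hf0 : 0 < f0) {bs : ℝ} (hbs : 0 < bs)
    (hz : PHI d μ f0 bs = 0) : StrictAntiOn (hh d μ f0) (Icc 0 bs) := by
  apply strictAntiOn_of_deriv_neg (convex_Icc _ _)
  · apply ContinuousOn.div (contHH d f0).continuousOn (contKK d μ f0).continuousOn
    intro x hx
    exact (KK_pos d μ f0 hd hμ hf0 hx.1).ne'
  · intro x hx
    rw [interior_Icc] at hx
    have hKx : 0 < KK d μ f0 x := KK_pos d μ f0 hd hμ hf0 hx.1.le
    rw [(hasDerivAt_hh d μ f0 hKx.ne').deriv]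
    apply div_neg_of_neg_of_pos _ (by positivity)
    have hphix : PHI d μ f0 x < 0 := by
      have := PHI_strictMonoOn d μ f0 hd hμ hf0 (mem_Ici.mpr hx.1.le)
        (mem_Ici.mpr (le_of_lt (lt_of_le_of_lt hx.1.le (lt_of_lt_of_le hx.2 le_rfl)))) hx.2
      rw [hz] at this; exact this
    have : 0 < d * FF d f0 x := mul_pos hd (FF_pos d f0 hd hf0 x)
    exact mul_neg_of_pos_of_neg this hphix

lemma hh_mono (hd : 0 < d) (hμ : 0 < μ) (hf0 : 0 < f0) {bs : ℝ} (hbs : 0 < bs)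
    (hz : PHI d μ f0 bs = 0) : StrictMonoOn (hh d μ f0) (Ici bs) := by
  apply strictMonoOn_of_deriv_pos (convex_Ici _)
  · apply ContinuousOn.div (contHH d f0).continuousOn (contKK d μ f0).continuousOn
    intro x hx
    exact (KK_pos d μ f0 hd hμ hf0 (le_trans hbs.le hx)).ne'
  · intro x hx
    rw [interior_Ici] at hx
    have hx0 : 0 ≤ x := le_trans hbs.le hx.le
    have hKx : 0 < KK d μ f0 x := KK_pos d μ f0 hd hμ hf0 hx0
    rw [(hasDerivAt_hh d μ f0 hKx.ne').deriv]
    apply div_pos _ (by positivity)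
    have hphix : 0 < PHI d μ f0 x := by
      have := PHI_strictMonoOn d μ f0 hd hμ hf0 (mem_Ici.mpr hbs.le)
        (mem_Ici.mpr hx0) hx
      rw [hz] at this; exact this
    exact mul_pos (mul_pos hd (FF_pos d f0 hd hf0 x)) hphix

lemma hh_zero (hd : 0 < d) (hμ : 0 < μ) (hf0 : 0 < f0) : hh d μ f0 0 = f0 := by
  unfold hh HH KK
  norm_num
  rw [sq, mul_div_assoc, div_self hf0.ne', mul_one]


def Q (c : ℝ) (p : ℝ × ℝ) : Prop :=
  p.2 > -1/d ∧ p.1 > 0 ∧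
  p.1^2 - c*p.1 = d*p.2*μ/(1+d*p.2) ∧ p.1 = (f0 + d*p.2^2)/c

lemma sol_iff (hd : 0 < d) (hf0 : 0 < f0) {c : ℝ} (hc : 0 < c) (p : ℝ × ℝ) :
    Q d μ f0 c p ↔ 0 < 1 + d * p.2 ∧ p.1 = FF d f0 p.2 / c ∧
      HH d f0 p.2 = c ^ 2 * KK d μ f0 p.2 := by
  obtain ⟨α, β⟩ := p
  simp only [Q, FF, HH, KK]
  constructor
  · rintro ⟨h1, _h2, h3, h4⟩
    have ht : 0 < 1 + d * β := by
      have h1' : -1/d < β := h1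
      have := (div_lt_iff₀ hd).mp h1'
      linarith
    refine ⟨ht, h4, ?_⟩
    have h6 : α^2 - c*α - d*β*μ/(1+d*β) = 0 := sub_eq_zero_of_eq h3
    have expand : (f0 + d*β^2)^2 * (1+d*β) - c^2 * ((f0 + d*β^2)*(1+d*β) + d*β*μ)
        = (α^2 - c*α - d*β*μ/(1+d*β)) * (c^2 * (1+d*β)) := by
      rw [h4]; field_simp; ring
    rw [h6, zero_mul] at expand
    linarith
  · rintro ⟨ht, h2, h3⟩
    have hβ : -1/d < β := by
      rw [div_lt_iff₀ hd]; linarith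
    have hα : 0 < α := by
      rw [h2]
      exact div_pos (FF_pos d f0 hd hf0 β) hc
    refine ⟨hβ, hα, ?_, h2⟩
    have expand : α^2 - c*α - d*β*μ/(1+d*β)
        = ((f0 + d*β^2)^2 * (1+d*β) - c^2 * ((f0 + d*β^2)*(1+d*β) + d*β*μ))
          / (c^2 * (1+d*β)) := by
      rw [h2]; field_simp; ring
    rw [h3, sub_self, zero_div] at expand
    linarith

/-- For negative β with positive K, the ratio exceeds f0. -/
lemma neg_beta_bound (hd : 0 < d) (hμ : 0 < μ) (hf0 : 0 < f0) {β : ℝ}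
    (hβ : β < 0) (ht : 0 < 1 + d * β) :
    f0 * KK d μ f0 β < HH d f0 β := by
  unfold HH KK
  have key : (f0 + d*β^2)^2 * (1+d*β) - f0 * ((f0 + d*β^2)*(1+d*β) + d*β*μ)
      = (f0 + d*β^2) * (1+d*β) * (d*β^2) - f0 * (d*β) * μ := by ring
  have h1 : 0 ≤ (f0 + d*β^2) * (1+d*β) * (d*β^2) :=
    mul_nonneg (mul_nonneg (FF_pos d f0 hd hf0 β).le ht.le) (by positivity)
  have h2 : f0 * (d*β) * μ < 0 := by
    have : d * β < 0 := mul_neg_of_pos_of_neg hd hβ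
    exact mul_neg_of_neg_of_pos (mul_neg_of_pos_of_neg hf0 this) hμ
  nlinarith [key]

/-- For β ≥ 0, H - (F-μ)K = μF + μ²dβ ≥ 0, so h ≥ F - μ. -/
lemma lower_bound (hd : 0 < d) (hμ : 0 < μ) (hf0 : 0 < f0) {β : ℝ} (hβ : 0 ≤ β) :
    (FF d f0 β - μ) * KK d μ f0 β ≤ HH d f0 β := by
  unfold FF HH KK
  have key : (f0 + d*β^2)^2 * (1+d*β) - (f0 + d*β^2 - μ) * ((f0 + d*β^2)*(1+d*β) + d*β*μ)
      = μ * (f0 + d*β^2) + μ^2 * (d*β) := by ring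
  nlinarith [key, mul_pos hμ (FF_pos d f0 hd hf0 β), mul_nonneg (mul_nonneg (sq_nonneg μ) hd.le) hβ]


lemma KK_at_zero : KK d μ f0 0 = f0 := by unfold KK; ring
lemma HH_at_zero : HH d f0 0 = f0 ^ 2 := by unfold HH; ring

lemma KK_at_neg (hd : 0 < d) : KK d μ f0 (-1/d) = -μ := by
  unfold KK; field_simp; ring

lemma neg_side (hd : 0 < d) (hμ : 0 < μ) (hf0 : 0 < f0) {c : ℝ} (hc : 0 < c)
    (hcf : f0 < c ^ 2) :
    ∃ β : ℝ, β ≤ 0 ∧ 0 < 1 + d * β ∧ HH d f0 β = c ^ 2 * KK d μ f0 β := by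
  have hd0 : -1/d < 0 := by
    rw [div_neg_iff]; right; constructor <;> linarith
  set S : Set ℝ := Icc (-1/d) 0 ∩ KK d μ f0 ⁻¹' {0} with hS
  have hScomp : IsCompact S :=
    isCompact_Icc.inter_right (isClosed_singleton.preimage (contKK d μ f0))
  have hSne : S.Nonempty := by
    have hsub : Icc (KK d μ f0 (-1/d)) (KK d μ f0 0) ⊆ KK d μ f0 '' Icc (-1/d) 0 :=
      intermediate_value_Icc hd0.le (contKK d μ f0).continuousOn
    have h0mem : (0:ℝ) ∈ Icc (KK d μ f0 (-1/d)) (KK d μ f0 0) := by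
      rw [KK_at_neg d μ f0 hd, KK_at_zero]
      exact ⟨by linarith, hf0.le⟩
    obtain ⟨y, hy, hy0⟩ := hsub h0mem
    exact ⟨y, hy, hy0⟩
  set z := sSup S with hz
  have hzS : z ∈ S := hScomp.sSup_mem hSne
  have hzK : KK d μ f0 z = 0 := hzS.2
  have hzneg : z < 0 := by
    rcases lt_or_eq_of_le hzS.1.2 with h | h
    · exact h
    · exfalso; rw [h, KK_at_zero] at hzK; exact hf0.ne' hzK
  have hzgt : -1/d < z := by
    rcases lt_or_eq_of_le hzS.1.1 with h | h
    · exact h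
    · exfalso; rw [← h, KK_at_neg d μ f0 hd] at hzK; linarith
  have htz : 0 < 1 + d * z := by
    have := (div_lt_iff₀ hd).mp hzgt; linarith
  have hKpos : ∀ x, z < x → x ≤ 0 → 0 < KK d μ f0 x := by
    intro x hx1 hx2
    by_contra hcon
    push_neg at hcon
    rcases lt_or_eq_of_le hcon with h | h
    · have hsub : Icc (KK d μ f0 x) (KK d μ f0 0) ⊆ KK d μ f0 '' Icc x 0 :=
        intermediate_value_Icc hx2 (contKK d μ f0).continuousOn
      have h0mem : (0:ℝ) ∈ Icc (KK d μ f0 x) (KK d μ f0 0) := by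
        rw [KK_at_zero]; exact ⟨h.le, hf0.le⟩
      obtain ⟨y, hy, hy0⟩ := hsub h0mem
      have hyS : y ∈ S := ⟨⟨le_trans (le_of_lt (lt_trans hzgt hx1)) hy.1, hy.2⟩, hy0⟩
      have : y ≤ z := le_csSup hScomp.bddAbove hyS
      linarith [hy.1]
    · have hxS : x ∈ S := ⟨⟨le_trans hzgt.le hx1.le, hx2⟩, by simp [h]⟩
      have : x ≤ z := le_csSup hScomp.bddAbove hxS
      linarith
  set η := f0 ^ 2 * (1 + d * z) with hη
  have hηpos : 0 < η := by positivity
  have hHlb : ∀ x, z ≤ x → x ≤ 0 → η ≤ HH d f0 x := by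
    intro x hx1 hx2
    unfold HH
    have e1 : f0 ^ 2 ≤ (f0 + d * x ^ 2) ^ 2 := by nlinarith [sq_nonneg x, mul_nonneg hd.le (sq_nonneg x)]
    have e2 : 1 + d * z ≤ 1 + d * x := by nlinarith
    show f0 ^ 2 * (1 + d * z) ≤ (f0 + d * x ^ 2) ^ 2 * (1 + d * x)
    exact mul_le_mul e1 e2 htz.le (by positivity)
  have hcontz : ContinuousAt (KK d μ f0) z := (contKK d μ f0).continuousAt
  obtain ⟨δ, hδpos, hδ⟩ := Metric.continuousAt_iff.mp hcontz (η / c ^ 2) (by positivity)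
  set w := z + min δ (-z) / 2 with hw
  have hminpos : 0 < min δ (-z) := lt_min hδpos (by linarith)
  have hzw : z < w := by rw [hw]; linarith
  have hw0 : w < 0 := by
    have : min δ (-z) ≤ -z := min_le_right _ _
    rw [hw]; linarith
  have hdistw : dist w z < δ := by
    rw [Real.dist_eq, hw]
    have h1 : min δ (-z) ≤ δ := min_le_left _ _
    rw [abs_of_pos (by linarith)]
    linarith
  have hKw_small : KK d μ f0 w < η / c ^ 2 := by
    have := hδ hdistw
    rw [Real.dist_eq, hzK, sub_zero] at this
    exact lt_of_le_of_lt (le_abs_self _) this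
  have hgw : 0 < HH d f0 w - c ^ 2 * KK d μ f0 w := by
    have h1 : η ≤ HH d f0 w := hHlb w hzw.le hw0.le
    have h2 : c ^ 2 * KK d μ f0 w < c ^ 2 * (η / c ^ 2) :=
      mul_lt_mul_of_pos_left hKw_small (by positivity)
    rw [mul_div_cancel₀ _ (by positivity : (c:ℝ) ^ 2 ≠ 0)] at h2
    linarith
  have hg0 : HH d f0 0 - c ^ 2 * KK d μ f0 0 < 0 := by
    rw [HH_at_zero, KK_at_zero]
    nlinarith
  set g : ℝ → ℝ := fun x => HH d f0 x - c ^ 2 * KK d μ f0 x with hgdef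
  have hgcont : Continuous g := by
    apply (contHH d f0).sub (continuous_const.mul (contKK d μ f0))
  have hsub : Icc (g 0) (g w) ⊆ g '' Icc w 0 :=
    intermediate_value_Icc' hw0.le hgcont.continuousOn
  obtain ⟨β₁, hβ₁mem, hβ₁⟩ := hsub ⟨hg0.le, hgw.le⟩
  refine ⟨β₁, hβ₁mem.2, ?_, ?_⟩
  · have : -1/d < β₁ := lt_of_lt_of_le (lt_trans hzgt hzw) hβ₁mem.1
    have := (div_lt_iff₀ hd).mp this; linarith
  · have : g β₁ = 0 := hβ₁
    simp only [hgdef] at this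
    linarith


lemma HH_pos (hd : 0 < d) (hf0 : 0 < f0) {β : ℝ} (ht : 0 < 1 + d * β) :
    0 < HH d f0 β := by
  have h := FF_pos d f0 hd hf0 β
  unfold FF at h; unfold HH
  exact mul_pos (pow_pos h 2) ht

lemma KK_pos_of (hd : 0 < d) (hf0 : 0 < f0) {c β : ℝ} (hc : 0 < c)
    (ht : 0 < 1 + d * β) (heq : HH d f0 β = c ^ 2 * KK d μ f0 β) :
    0 < KK d μ f0 β := by
  have hH := HH_pos d f0 hd hf0 ht
  by_contra hcon
  push_neg at hcon
  nlinarith [mul_nonneg (sq_nonneg c) (neg_nonneg.mpr hcon)]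

set_option maxHeartbeats 1000000 in
theorem key (hd : 0 < d) (hμ : 0 < μ) (hf0 : 0 < f0) :
    ∃! cstar : ℝ, 0 < cstar ∧
      (∃! p : ℝ × ℝ, Q d μ f0 cstar p) ∧
      (∀ c : ℝ, 0 < c → c < cstar → ¬ ∃ p : ℝ × ℝ, Q d μ f0 c p) ∧
      (∀ c : ℝ, cstar < c → ∃ p q : ℝ × ℝ, p ≠ q ∧ Q d μ f0 c p ∧ Q d μ f0 c q) := by
  obtain ⟨bs, hbs, hbsμ, hbsphi⟩ := exists_bstar d μ f0 hd hμ hf0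
  have htbs : 0 < 1 + d * bs := by linarith [mul_pos hd hbs]
  have hKbs : 0 < KK d μ f0 bs := KK_pos d μ f0 hd hμ hf0 hbs.le
  have hHbs : 0 < HH d f0 bs := HH_pos d f0 hd hf0 htbs
  set m := hh d μ f0 bs with hm
  have hmpos : 0 < m := div_pos hHbs hKbs
  have hmf0 : m < f0 := by
    have := (hh_anti d μ f0 hd hμ hf0 hbs hbsphi) ⟨le_rfl, hbs.le⟩ ⟨hbs.le, le_rfl⟩ hbs
    rw [hh_zero d μ f0 hd hμ hf0] at this
    exact this
  have hmin : ∀ x : ℝ, 0 ≤ x → m ≤ hh d μ f0 x := by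
    intro x hx
    rcases lt_trichotomy x bs with h | h | h
    · exact ((hh_anti d μ f0 hd hμ hf0 hbs hbsphi) ⟨hx, h.le⟩ ⟨hbs.le, le_rfl⟩ h).le
    · rw [h]
    · exact ((hh_mono d μ f0 hd hμ hf0 hbs hbsphi) (mem_Ici.mpr le_rfl) (mem_Ici.mpr h.le) h).le
  have hminstrict : ∀ x : ℝ, 0 ≤ x → x ≠ bs → m < hh d μ f0 x := by
    intro x hx hne
    rcases lt_trichotomy x bs with h | h | h
    · exact (hh_anti d μ f0 hd hμ hf0 hbs hbsphi) ⟨hx, h.le⟩ ⟨hbs.le, le_rfl⟩ h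
    · exact absurd h hne
    · exact (hh_mono d μ f0 hd hμ hf0 hbs hbsphi) (mem_Ici.mpr le_rfl) (mem_Ici.mpr h.le) h
  set cstar := Real.sqrt m with hcst
  have hcstar : 0 < cstar := Real.sqrt_pos.mpr hmpos
  have hcs2 : cstar ^ 2 = m := Real.sq_sqrt hmpos.le
  have hHKbs : HH d f0 bs = m * KK d μ f0 bs := (div_eq_iff hKbs.ne').mp rfl
  -- no solutions below cstar
  have Hb : ∀ c : ℝ, 0 < c → c < cstar → ¬ ∃ p : ℝ × ℝ, Q d μ f0 c p := by
    rintro c hc hlt ⟨p, hp⟩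
    rw [sol_iff d μ f0 hd hf0 hc] at hp
    obtain ⟨ht, hα, heq⟩ := hp
    have hc2 : c ^ 2 < m := by
      rw [← hcs2]; exact pow_lt_pow_left₀ hlt hc.le two_ne_zero
    have hK : 0 < KK d μ f0 p.2 := KK_pos_of d μ f0 hd hf0 hc ht heq
    have hhval : hh d μ f0 p.2 = c ^ 2 := (div_eq_iff hK.ne').mpr heq
    rcases lt_or_ge p.2 0 with hβ | hβ
    · have hnb := neg_beta_bound d μ f0 hd hμ hf0 hβ ht
      nlinarith [mul_lt_mul_of_pos_right (show c ^ 2 < f0 by linarith) hK]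
    · have := hmin p.2 hβ
      rw [hhval] at this
      linarith
  -- unique solution at cstar
  have Ha : ∃! p : ℝ × ℝ, Q d μ f0 cstar p := by
    refine ⟨(FF d f0 bs / cstar, bs), ?_, ?_⟩
    · show Q d μ f0 cstar (FF d f0 bs / cstar, bs)
      rw [sol_iff d μ f0 hd hf0 hcstar]
      exact ⟨htbs, rfl, by rw [hcs2]; exact hHKbs⟩
    · rintro p hp
      rw [sol_iff d μ f0 hd hf0 hcstar] at hp
      obtain ⟨ht, hα, heq⟩ := hp
      have hK : 0 < KK d μ f0 p.2 := KK_pos_of d μ f0 hd hf0 hcstar ht heq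
      have hhval : hh d μ f0 p.2 = m := by
        rw [← hcs2]; exact (div_eq_iff hK.ne').mpr heq
      have hβbs : p.2 = bs := by
        rcases lt_or_ge p.2 0 with hβ | hβ
        · exfalso
          have hnb := neg_beta_bound d μ f0 hd hμ hf0 hβ ht
          rw [hcs2] at heq
          nlinarith [mul_lt_mul_of_pos_right (show m < f0 from hmf0) hK]
        · by_contra hne
          have := hminstrict p.2 hβ hne
          rw [hhval] at this
          exact lt_irrefl m this
      rw [Prod.ext_iff]
      exact ⟨by rw [hα, hβbs], hβbs⟩
  -- at least two solutions above cstar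
  have Hc : ∀ c : ℝ, cstar < c → ∃ p q : ℝ × ℝ, p ≠ q ∧ Q d μ f0 c p ∧ Q d μ f0 c q := by
    intro c hltc
    have hc : 0 < c := lt_trans hcstar hltc
    have hc2 : m < c ^ 2 := by
      rw [← hcs2]; exact pow_lt_pow_left₀ hltc hcstar.le two_ne_zero
    -- right solution
    set B := bs + Real.sqrt ((c ^ 2 + μ) / d) with hB
    have hsqn : 0 ≤ (c ^ 2 + μ) / d := by positivity
    have hBbs : bs ≤ B := le_add_of_nonneg_right (Real.sqrt_nonneg _)
    have hB0 : 0 < B := lt_of_lt_of_le hbs hBbs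
    have hBlb : (c ^ 2 + μ) / d ≤ B ^ 2 := by
      have h1 : Real.sqrt ((c ^ 2 + μ) / d) ≤ B := by rw [hB]; linarith
      have h2 := Real.sq_sqrt hsqn
      nlinarith [Real.sqrt_nonneg ((c ^ 2 + μ) / d)]
    have hFB : c ^ 2 + μ ≤ d * B ^ 2 := by
      rw [div_le_iff₀ hd] at hBlb; linarith
    have hKB : 0 < KK d μ f0 B := KK_pos d μ f0 hd hμ hf0 hB0.le
    have hgB : 0 ≤ HH d f0 B - c ^ 2 * KK d μ f0 B := by
      have h1 := lower_bound d μ f0 hd hμ hf0 hB0.le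
      have h2 : c ^ 2 ≤ FF d f0 B - μ := by unfold FF; linarith
      nlinarith [mul_le_mul_of_nonneg_right h2 hKB.le]
    have hgbs : HH d f0 bs - c ^ 2 * KK d μ f0 bs < 0 := by
      nlinarith [mul_lt_mul_of_pos_right hc2 hKbs]
    set g : ℝ → ℝ := fun x => HH d f0 x - c ^ 2 * KK d μ f0 x with hgdef
    have hgcont : Continuous g := (contHH d f0).sub (continuous_const.mul (contKK d μ f0))
    have hsub2 : Icc (g bs) (g B) ⊆ g '' Icc bs B :=
      intermediate_value_Icc hBbs hgcont.continuousOn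
    obtain ⟨β₂, hβ₂mem, hβ₂⟩ := hsub2 ⟨hgbs.le, hgB⟩
    have heq₂ : HH d f0 β₂ = c ^ 2 * KK d μ f0 β₂ := by
      have h0 : HH d f0 β₂ - c ^ 2 * KK d μ f0 β₂ = 0 := hβ₂
      linarith
    have hβ₂0 : 0 < β₂ := lt_of_lt_of_le hbs hβ₂mem.1
    have hK₂ : 0 < KK d μ f0 β₂ := KK_pos d μ f0 hd hμ hf0 hβ₂0.le
    have ht₂ : 0 < 1 + d * β₂ := by linarith [mul_pos hd hβ₂0]
    have hh₂ : hh d μ f0 β₂ = c ^ 2 := (div_eq_iff hK₂.ne').mpr heq₂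
    have hβ₂ne : β₂ ≠ bs := by
      intro h
      rw [h] at hh₂
      rw [← hm] at hh₂
      linarith
    -- left solution
    have hleft : ∃ β₁ : ℝ, β₁ < β₂ ∧ 0 < 1 + d * β₁ ∧
        HH d f0 β₁ = c ^ 2 * KK d μ f0 β₁ := by
      rcases le_or_gt (c ^ 2) f0 with hcf | hcf
      · have hg0 : 0 ≤ g 0 := by
          simp only [hgdef, HH_at_zero, KK_at_zero]
          nlinarith
        have hsub1 : Icc (g bs) (g 0) ⊆ g '' Icc 0 bs :=
          intermediate_value_Icc' hbs.le hgcont.continuousOn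
        obtain ⟨β₁, hβ₁mem, hβ₁⟩ := hsub1 ⟨hgbs.le, hg0⟩
        have heq₁ : HH d f0 β₁ = c ^ 2 * KK d μ f0 β₁ := by
          have h0 : HH d f0 β₁ - c ^ 2 * KK d μ f0 β₁ = 0 := hβ₁
          linarith
        have hK₁ : 0 < KK d μ f0 β₁ := KK_pos d μ f0 hd hμ hf0 hβ₁mem.1
        have hh₁ : hh d μ f0 β₁ = c ^ 2 := (div_eq_iff hK₁.ne').mpr heq₁
        have hβ₁ne : β₁ ≠ bs := by
          intro h
          rw [h, ← hm] at hh₁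
          linarith
        have hβ₁lt : β₁ < bs := lt_of_le_of_ne hβ₁mem.2 hβ₁ne
        have ht₁ : 0 < 1 + d * β₁ := by linarith [mul_nonneg hd.le hβ₁mem.1]
        have hβ₂gt : bs < β₂ := lt_of_le_of_ne hβ₂mem.1 (Ne.symm hβ₂ne)
        exact ⟨β₁, lt_trans hβ₁lt hβ₂gt, ht₁, heq₁⟩
      · obtain ⟨β₁, hβ₁0, ht₁, heq₁⟩ := neg_side d μ f0 hd hμ hf0 hc hcf
        exact ⟨β₁, lt_of_le_of_lt hβ₁0 hβ₂0, ht₁, heq₁⟩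
    obtain ⟨β₁, hβ₁₂, ht₁, heq₁⟩ := hleft
    refine ⟨(FF d f0 β₁ / c, β₁), (FF d f0 β₂ / c, β₂), ?_, ?_, ?_⟩
    · intro hpq
      have := congrArg Prod.snd hpq
      simp only at this
      linarith
    · rw [sol_iff d μ f0 hd hf0 hc]
      exact ⟨ht₁, rfl, heq₁⟩
    · rw [sol_iff d μ f0 hd hf0 hc]
      exact ⟨ht₂, rfl, heq₂⟩
  refine ⟨cstar, ⟨hcstar, Ha, Hb, Hc⟩, ?_⟩
  rintro c' ⟨hc'pos, hc'uniq, hc'below, hc'above⟩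
  rcases lt_trichotomy c' cstar with h | h | h
  · exfalso
    obtain ⟨p, hp, -⟩ := hc'uniq
    exact (Hb c' hc'pos h) ⟨p, hp⟩
  · exact h
  · exfalso
    obtain ⟨p, q, hpq, hp, hq⟩ := Hc c' h
    obtain ⟨r, -, huniq⟩ := hc'uniq
    exact hpq ((huniq p hp).trans (huniq q hq).symm)

end

end Stmt13

theorem stmt_13 (d μ f0 : ℝ) (hd : 0 < d) (hμ : 0 < μ) (hf0 : 0 < f0) :
    let P : ℝ → ℝ × ℝ → Prop := fun c p =>
      p.2 > -1/d ∧ p.1 > 0 ∧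
      p.1^2 - c*p.1 = d*p.2*μ/(1+d*p.2) ∧ p.1 = (f0 + d*p.2^2)/c
    ∃! cstar : ℝ, 0 < cstar ∧
      (∃! p : ℝ × ℝ, P cstar p) ∧
      (∀ c : ℝ, 0 < c → c < cstar → ¬ ∃ p : ℝ × ℝ, P c p) ∧
      (∀ c : ℝ, cstar < c → ∃ p q : ℝ × ℝ, p ≠ q ∧ P c p ∧ P c q) := by
  intro P
  exact Stmt13.key d μ f0 hd hμ hf0
end
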